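/- Fix a real n×n matrix H with ‖H‖ < 1, real n×n matrices G and Q, and ν ∈ ℝⁿ. For a bounded sequence X̄ : ℕ → ℝⁿ define X̂_k(X̄) := H^k ν + ∑_{j=0}^{k-1} H^{k-1-j} G ∑_{s=j+1}^{∞} (Hᵀ)^{s-j-1} Q X̄_s. Then for any two bounded sequences X̄¹, X̄² : ℕ → ℝⁿ and every k ∈ ℕ, ‖X̂_k(X̄¹) - X̂_k(X̄²)‖ ≤ (‖Q‖ ‖G‖ / (1 - ‖H‖)²) · sup_j ‖X̄¹_j - X̄²_j‖. -/

import Mathlib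

/-- The (single-type) aggregate trajectory
`X̂_k(X̄) = H^k ν + ∑_{j=0}^{k-1} H^{k-1-j} G ∑_{s=j+1}^∞ (Hᵀ)^{s-j-1} Q X̄_s`
(inner series reindexed via `s = j + 1 + m`). Matrices are modeled as continuous
linear maps on Euclidean space; transpose is the adjoint. -/
noncomputable def XhatSeq {n : ℕ}
    (H G Q : EuclideanSpace ℝ (Fin n) →L[ℝ] EuclideanSpace ℝ (Fin n))
    (ν : EuclideanSpace ℝ (Fin n)) (X : ℕ → EuclideanSpace ℝ (Fin n))
    (k : ℕ) : EuclideanSpace ℝ (Fin n) :=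
  (H ^ k) ν +
    ∑ j ∈ Finset.range k, (H ^ (k - 1 - j))
      (G (∑' m : ℕ, ((ContinuousLinearMap.adjoint H) ^ m) (Q (X (j + 1 + m)))))

lemma pow_apply_le {n : ℕ}
    (T : EuclideanSpace ℝ (Fin n) →L[ℝ] EuclideanSpace ℝ (Fin n)) :
    ∀ (m : ℕ) (x : EuclideanSpace ℝ (Fin n)), ‖(T ^ m) x‖ ≤ ‖T‖ ^ m * ‖x‖ := by
  intro m
  induction m with
  | zero => intro x; rw [pow_zero, pow_zero, one_mul, ContinuousLinearMap.one_apply]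
  | succ m ih =>
    intro x
    rw [pow_succ]
    calc ‖(T ^ m * T) x‖ = ‖(T ^ m) (T x)‖ := rfl
      _ ≤ ‖T‖ ^ m * ‖T x‖ := ih (T x)
      _ ≤ ‖T‖ ^ m * (‖T‖ * ‖x‖) := by
          exact mul_le_mul_of_nonneg_left (T.le_opNorm x)
            (pow_nonneg (norm_nonneg _) m)
      _ = ‖T‖ ^ (m + 1) * ‖x‖ := by ring

set_option maxHeartbeats 1000000 in
set_option synthInstance.maxHeartbeats 100000 in
/-- With `‖H‖ < 1`, for any two bounded sequences `X̄¹, X̄²` and any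
uniform bound `D` on `‖X̄¹_j - X̄²_j‖` (i.e. any upper bound of the sup), one has
`‖X̂_k(X̄¹) - X̂_k(X̄²)‖ ≤ (‖Q‖‖G‖/(1 - ‖H‖)²) D` for every `k`. -/
theorem stmt4 {n : ℕ}
    (H G Q : EuclideanSpace ℝ (Fin n) →L[ℝ] EuclideanSpace ℝ (Fin n))
    (hH : ‖H‖ < 1) (ν : EuclideanSpace ℝ (Fin n))
    (X1 X2 : ℕ → EuclideanSpace ℝ (Fin n)) (C1 C2 : ℝ)
    (hX1 : ∀ k, ‖X1 k‖ ≤ C1) (hX2 : ∀ k, ‖X2 k‖ ≤ C2)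
    (D : ℝ) (hD : ∀ j, ‖X1 j - X2 j‖ ≤ D) :
    ∀ k, ‖XhatSeq H G Q ν X1 k - XhatSeq H G Q ν X2 k‖
      ≤ ‖Q‖ * ‖G‖ / (1 - ‖H‖) ^ 2 * D := by
  set A := ContinuousLinearMap.adjoint H with hAdef
  have ht0 : (0:ℝ) ≤ ‖H‖ := norm_nonneg _
  have h1t : (0:ℝ) < 1 - ‖H‖ := by linarith
  have hD0 : (0:ℝ) ≤ D := le_trans (norm_nonneg _) (hD 0)
  have hAn : ‖A‖ = ‖H‖ := LinearIsometryEquiv.norm_map ContinuousLinearMap.adjoint H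
  -- summability of the inner series
  have key : ∀ (Y : ℕ → EuclideanSpace ℝ (Fin n)) (C : ℝ), (∀ s, ‖Y s‖ ≤ C) →
      ∀ j, Summable (fun m => (A ^ m) (Q (Y (j + 1 + m)))) := by
    intro Y C hY j
    apply Summable.of_norm
    refine Summable.of_nonneg_of_le (fun m => norm_nonneg _)
      (f := fun m => ‖H‖ ^ m * (‖Q‖ * C)) ?_ ?_
    · intro m
      calc ‖(A ^ m) (Q (Y (j + 1 + m)))‖ ≤ ‖A‖ ^ m * ‖Q (Y (j + 1 + m))‖ :=
            pow_apply_le A m _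
        _ ≤ ‖H‖ ^ m * (‖Q‖ * C) := by
            rw [hAn]
            refine mul_le_mul_of_nonneg_left ?_ (pow_nonneg ht0 m)
            exact le_trans (Q.le_opNorm _)
              (mul_le_mul_of_nonneg_left (hY _) (norm_nonneg Q))
    · exact (summable_geometric_of_lt_one ht0 hH).mul_right _
  intro k
  have hdiff : XhatSeq H G Q ν X1 k - XhatSeq H G Q ν X2 k
      = ∑ j ∈ Finset.range k, (H ^ (k - 1 - j))
          (G (∑' m : ℕ, (A ^ m) (Q (X1 (j + 1 + m) - X2 (j + 1 + m))))) := by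
    unfold XhatSeq
    rw [add_sub_add_left_eq_sub, ← Finset.sum_sub_distrib]
    refine Finset.sum_congr rfl fun j _ => ?_
    rw [← map_sub, ← map_sub]
    congr 2
    rw [← Summable.tsum_sub (key X1 C1 hX1 j) (key X2 C2 hX2 j)]
    exact tsum_congr fun m => by rw [← map_sub, ← map_sub]
  rw [hdiff]
  have hterm : ∀ j, ‖∑' m : ℕ, (A ^ m) (Q (X1 (j + 1 + m) - X2 (j + 1 + m)))‖
      ≤ (1 - ‖H‖)⁻¹ * (‖Q‖ * D) := by
    intro j
    refine tsum_of_norm_bounded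
      ((hasSum_geometric_of_lt_one ht0 hH).mul_right (‖Q‖ * D)) fun m => ?_
    calc ‖(A ^ m) (Q (X1 (j + 1 + m) - X2 (j + 1 + m)))‖
        ≤ ‖A‖ ^ m * ‖Q (X1 (j + 1 + m) - X2 (j + 1 + m))‖ := pow_apply_le A m _
      _ ≤ ‖H‖ ^ m * (‖Q‖ * D) := by
          rw [hAn]
          refine mul_le_mul_of_nonneg_left ?_ (pow_nonneg ht0 m)
          exact le_trans (Q.le_opNorm _)
            (mul_le_mul_of_nonneg_left (hD _) (norm_nonneg Q))
  calc ‖∑ j ∈ Finset.range k, (H ^ (k - 1 - j))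
          (G (∑' m : ℕ, (A ^ m) (Q (X1 (j + 1 + m) - X2 (j + 1 + m)))))‖
      ≤ ∑ j ∈ Finset.range k,
          ‖H‖ ^ (k - 1 - j) * (‖G‖ * ((1 - ‖H‖)⁻¹ * (‖Q‖ * D))) := by
        refine norm_sum_le_of_le _ fun j _ => ?_
        calc ‖(H ^ (k - 1 - j)) (G (∑' m : ℕ, (A ^ m) (Q (X1 (j + 1 + m) - X2 (j + 1 + m)))))‖
            ≤ ‖H‖ ^ (k - 1 - j) * ‖G (∑' m : ℕ, (A ^ m) (Q (X1 (j + 1 + m) - X2 (j + 1 + m))))‖ :=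
              pow_apply_le H _ _
          _ ≤ ‖H‖ ^ (k - 1 - j) * (‖G‖ * ((1 - ‖H‖)⁻¹ * (‖Q‖ * D))) := by
              refine mul_le_mul_of_nonneg_left ?_ (pow_nonneg ht0 _)
              exact le_trans (G.le_opNorm _)
                (mul_le_mul_of_nonneg_left (hterm j) (norm_nonneg G))
    _ = (∑ j ∈ Finset.range k, ‖H‖ ^ (k - 1 - j)) * (‖G‖ * ((1 - ‖H‖)⁻¹ * (‖Q‖ * D))) := by
        rw [Finset.sum_mul]
    _ ≤ (1 - ‖H‖)⁻¹ * (‖G‖ * ((1 - ‖H‖)⁻¹ * (‖Q‖ * D))) := by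
        refine mul_le_mul_of_nonneg_right ?_ ?_
        · rw [Finset.sum_range_reflect (fun i => ‖H‖ ^ i) k]
          calc (∑ j ∈ Finset.range k, ‖H‖ ^ j)
              ≤ ∑' j : ℕ, ‖H‖ ^ j :=
                Summable.sum_le_tsum _ (fun i _ => pow_nonneg ht0 i)
                  (summable_geometric_of_lt_one ht0 hH)
            _ = (1 - ‖H‖)⁻¹ := tsum_geometric_of_lt_one ht0 hH
        · positivity
    _ = ‖Q‖ * ‖G‖ / (1 - ‖H‖) ^ 2 * D := by
        field_simp
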